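/- Let (Y,d) be a weak metric space and j ≥ 2. The map H : [0,1] × Cone(Y,j) → (ℝ × ℝ × Y)^j that at time s replaces each triple (a_i, b_i, y_i) of κ by ((1−s)a_i + s(c_i − v), (1−s)b_i + s(c_i + v), y_i), where c_i = (a_i + b_i)/2 and v = v(φ_j(κ)), takes values in Cone(Y,j) for every s ∈ [0,1], and defines a homotopy from the identity of Cone(Y,j) to φ̄_j ∘ φ_j. Consequently φ_j : Cone(Y,j) → F(ℝ × Y, j) is a homotopy equivalence with homotopy inverse φ̄_j. -/

import Mathlib

open unitInterval Topology

noncomputable section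

universe u v

/-! ### Basic configuration/cone sets -/

/-- The configuration set: tuples with pairwise distinct coordinates. -/
def ConfigSet (Z : Type*) (j : ℕ) : Set (Fin j → Z) :=
  {f | Function.Injective f}

/-- `Cone(Y,j)`: tuples of triples `(a,b,y)` with `a < b` and, whenever two triples
carry the same point of `Y`, the corresponding intervals have disjoint interiors. -/
def ConeSet (Y : Type*) (j : ℕ) : Set (Fin j → ℝ × ℝ × Y) :=
  {f | (∀ i, (f i).1 < (f i).2.1) ∧
    ∀ k l, k ≠ l → (f k).2.2 = (f l).2.2 → (f k).2.1 ≤ (f l).1 ∨ (f l).2.1 ≤ (f k).1}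

/-- A weak metric on a space `Y`. -/
structure IsWeakMetric {Y : Type*} [TopologicalSpace Y] (d : Y → Y → ℝ) : Prop where
  continuous : Continuous fun p : Y × Y => d p.1 p.2
  nonneg : ∀ y y', 0 ≤ d y y'
  eq_zero_iff : ∀ y y', d y y' = 0 ↔ y = y'

/-- The auxiliary weak metric `g` on `ℝ × Y`. -/
def gfun {Y : Type*} (d : Y → Y → ℝ) (p q : ℝ × Y) : ℝ :=
  (1 / 2) * ((|p.1 - q.1| ^ 2 + d p.2 q.2) / (|p.1 - q.1| + d p.2 q.2 + 1))

/-- `v(κ) = min_{k ≠ l} g(κ k, κ l)`. -/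
def vfun {Y : Type*} (d : Y → Y → ℝ) {j : ℕ} (κ : Fin j → ℝ × Y) : ℝ :=
  ⨅ p : {p : Fin j × Fin j // p.1 ≠ p.2}, gfun d (κ p.1.1) (κ p.1.2)

/-- `φ_j`: sends each segment to its center point. -/
def centersFun {Y : Type*} {j : ℕ} (κ : Fin j → ℝ × ℝ × Y) : Fin j → ℝ × Y :=
  fun i => (((κ i).1 + (κ i).2.1) / 2, (κ i).2.2)

/-- `φ̄_j`: thickens each point into an interval of radius `v(κ)`. -/
def phibarFun {Y : Type*} (d : Y → Y → ℝ) {j : ℕ} (κ : Fin j → ℝ × Y) :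
    Fin j → ℝ × ℝ × Y :=
  fun i => ((κ i).1 - vfun d κ, (κ i).1 + vfun d κ, (κ i).2)

/-- `shrink_{s,t}`: linearly compress segments from `(0,1)` into `(s,t)`. -/
def shrinkFun {Y : Type*} (s t : ℝ) {j : ℕ} (κ : Fin j → ℝ × ℝ × Y) :
    Fin j → ℝ × ℝ × Y :=
  fun i => (s + (t - s) * (κ i).1, s + (t - s) * (κ i).2.1, (κ i).2.2)

theorem ConeSet.comp {Y : Type*} {i j : ℕ} {f : Fin j → ℝ × ℝ × Y} (hf : f ∈ ConeSet Y j)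
    {ν : Fin i → Fin j} (hν : Function.Injective ν) : (f ∘ ν) ∈ ConeSet Y i :=
  ⟨fun k => hf.1 (ν k), fun k l hkl h => hf.2 (ν k) (ν l) (fun e => hkl (hν e)) h⟩

/-! ### Labeled configuration spaces -/

/-- Generators for the equivalence relation defining `C(Y,X)`. -/
inductive ConfigRel (Y : Type u) (X : Type v) (x₀ : X) :
    (Σ j : ℕ, ↥(ConfigSet Y j) × (Fin j → X)) →
    (Σ j : ℕ, ↥(ConfigSet Y j) × (Fin j → X)) → Prop
  | mk {i j : ℕ} (ν : Fin i → Fin j) (hν : Function.Injective ν)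
      (y : ↥(ConfigSet Y j)) (x : Fin i → X) :
      ConfigRel Y X x₀ ⟨i, ⟨y.1 ∘ ν, y.2.comp hν⟩, x⟩
        ⟨j, y, Function.extend ν x fun _ => x₀⟩

/-- The labeled configuration space `C(Y, X)`. -/
def LabeledConfig (Y : Type u) (X : Type v) (x₀ : X) : Type (max u v) :=
  Quot (ConfigRel Y X x₀)

instance {Y : Type u} {X : Type v} {x₀ : X} [TopologicalSpace Y] [TopologicalSpace X] :
    TopologicalSpace (LabeledConfig Y X x₀) :=
  inferInstanceAs (TopologicalSpace (Quot (ConfigRel Y X x₀)))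

/-- The empty configuration. -/
def emptyConfig (Y : Type u) : ↥(ConfigSet Y 0) :=
  ⟨Fin.elim0, Function.injective_of_subsingleton _⟩

/-- The basepoint of `C(Y,X)`: the empty configuration. -/
def LabeledConfig.base (Y : Type u) (X : Type v) (x₀ : X) : LabeledConfig Y X x₀ :=
  Quot.mk _ ⟨0, emptyConfig Y, Fin.elim0⟩

/-- Generators for the equivalence relation defining `C₁(Y,X)`. -/
inductive Cone1Rel (Y : Type u) (X : Type v) (x₀ : X) :
    (Σ j : ℕ, ↥(ConeSet Y j) × (Fin j → X)) →
    (Σ j : ℕ, ↥(ConeSet Y j) × (Fin j → X)) → Prop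
  | mk {i j : ℕ} (ν : Fin i → Fin j) (hν : Function.Injective ν)
      (κ : ↥(ConeSet Y j)) (x : Fin i → X) :
      Cone1Rel Y X x₀ ⟨i, ⟨κ.1 ∘ ν, ConeSet.comp κ.2 hν⟩, x⟩
        ⟨j, κ, Function.extend ν x fun _ => x₀⟩

/-- The labeled space of segments `C₁(Y, X)`. -/
def LabeledCone (Y : Type u) (X : Type v) (x₀ : X) : Type (max u v) :=
  Quot (Cone1Rel Y X x₀)

instance {Y : Type u} {X : Type v} {x₀ : X} [TopologicalSpace Y] [TopologicalSpace X] :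
    TopologicalSpace (LabeledCone Y X x₀) :=
  inferInstanceAs (TopologicalSpace (Quot (Cone1Rel Y X x₀)))

/-- `C̄₁(Y,X)` : classes of configurations of segments with endpoints in `(0,1)`. -/
def BarC1Set (Y : Type u) (X : Type v) (x₀ : X) : Set (LabeledCone Y X x₀) :=
  {w | ∃ (j : ℕ) (κ : ↥(ConeSet Y j)) (x : Fin j → X),
    w = Quot.mk _ ⟨j, κ, x⟩ ∧ ∀ i, 0 < (κ.1 i).1 ∧ (κ.1 i).2.1 < 1}

/-! ### Suspension, cofibrations -/

/-- The relation collapsing `X × {0,1} ∪ {x₀} × I` to a point. -/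
def SuspRel (X : Type v) (x₀ : X) : X × I → X × I → Prop := fun p q =>
  (p.2 = 0 ∨ p.2 = 1 ∨ p.1 = x₀) ∧ (q.2 = 0 ∨ q.2 = 1 ∨ q.1 = x₀)

/-- The reduced suspension `ΣX`. -/
def Susp (X : Type v) (x₀ : X) : Type v :=
  Quot (SuspRel X x₀)

instance {X : Type v} {x₀ : X} [TopologicalSpace X] : TopologicalSpace (Susp X x₀) :=
  inferInstanceAs (TopologicalSpace (Quot (SuspRel X x₀)))

/-- The class `[x, t]` in `ΣX`. -/
def Susp.mk {X : Type v} (x₀ : X) (x : X) (t : I) : Susp X x₀ :=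
  Quot.mk _ (x, t)

/-- The basepoint of `ΣX`. -/
def Susp.base {X : Type v} (x₀ : X) : Susp X x₀ :=
  Quot.mk _ (x₀, 0)

/-- A map is a cofibration if it has the homotopy extension property. -/
def IsCofibration {A : Type*} {B : Type v} [TopologicalSpace A] [TopologicalSpace B]
    (φ : C(A, B)) : Prop :=
  ∀ (Z : Type v) (_ : TopologicalSpace Z) (f : C(B, Z)) (H : C(A × I, Z)),
    (∀ a, H (a, 0) = f (φ a)) →
    ∃ G : C(B × I, Z), (∀ b, G (b, 0) = f b) ∧ ∀ a t, G (φ a, t) = H (a, t)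

/-- A based space is nondegenerately based if the inclusion of the basepoint
is a cofibration. -/
def NondegeneratelyBased {X : Type v} [TopologicalSpace X] (x₀ : X) : Prop :=
  IsCofibration ⟨fun _ : Unit => x₀, continuous_const⟩

/-! ### Homotopy equivalences and weak homotopy equivalences -/

/-- A continuous map is a homotopy equivalence if it has a homotopy inverse. -/
def IsHomotopyEquiv {A : Type*} {B : Type*} [TopologicalSpace A] [TopologicalSpace B]
    (f : C(A, B)) : Prop :=
  ∃ g : C(B, A), (g.comp f).Homotopic (ContinuousMap.id A) ∧
    (f.comp g).Homotopic (ContinuousMap.id B)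

/-- The map induced on path components by a continuous map. -/
def zerothHomotopyMap {A : Type*} {B : Type*} [TopologicalSpace A] [TopologicalSpace B]
    (f : C(A, B)) : ZerothHomotopy A → ZerothHomotopy B :=
  Quotient.map f fun _ _ h => ⟨h.somePath.map f.continuous⟩

/-- The map induced on homotopy groups by a continuous map. -/
def homotopyGroupMap {A : Type*} {B : Type*} [TopologicalSpace A] [TopologicalSpace B]
    (f : C(A, B)) (N : Type*) (a : A) :
    HomotopyGroup N A a → HomotopyGroup N B (f a) :=
  Quotient.map (fun p => ⟨f.comp p.1, fun y hy => by
      simp only [ContinuousMap.comp_apply]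
      exact congrArg f (p.2 y hy)⟩)
    fun p q h => h.map fun H => H.compContinuousMap f

/-- A continuous map is a weak homotopy equivalence if it induces a bijection on path
components and isomorphisms on all homotopy groups at every basepoint. -/
def IsWeakHomotopyEquiv {A : Type*} {B : Type*} [TopologicalSpace A] [TopologicalSpace B]
    (f : C(A, B)) : Prop :=
  Function.Bijective (zerothHomotopyMap f) ∧
    ∀ (n : ℕ) (a : A), Function.Bijective (homotopyGroupMap f (Fin n) a)

variable {Y : Type u} [TopologicalSpace Y]

/-- The straight-line homotopy from the identity of `Cone(Y,j)` to `φ̄_j ∘ φ_j`. -/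
noncomputable def coneHomotopyFun (d : Y → Y → ℝ) {j : ℕ} (s : ℝ) (κ : Fin j → ℝ × ℝ × Y) :
    Fin j → ℝ × ℝ × Y :=
  fun i =>
    ((1 - s) * (κ i).1 + s * ((((κ i).1 + (κ i).2.1) / 2) - vfun d (centersFun κ)),
     (1 - s) * (κ i).2.1 + s * ((((κ i).1 + (κ i).2.1) / 2) + vfun d (centersFun κ)),
     (κ i).2.2)

/-! ### Auxiliary lemmas -/

section Aux

variable {d : Y → Y → ℝ} {j : ℕ}

lemma gfun_denom_pos (h0 : ∀ y y', 0 ≤ d y y') (p q : ℝ × Y) :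
    0 < |p.1 - q.1| + d p.2 q.2 + 1 := by
  have := abs_nonneg (p.1 - q.1); have := h0 p.2 q.2; linarith

lemma gfun_nonneg (h0 : ∀ y y', 0 ≤ d y y') (p q : ℝ × Y) : 0 ≤ gfun d p q := by
  have hden := gfun_denom_pos h0 p q
  have hnum : 0 ≤ |p.1 - q.1| ^ 2 + d p.2 q.2 := by
    have := h0 p.2 q.2; positivity
  exact mul_nonneg (by norm_num) (div_nonneg hnum hden.le)

lemma gfun_pos (hd : IsWeakMetric d) {p q : ℝ × Y} (hpq : p ≠ q) : 0 < gfun d p q := by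
  have hden := gfun_denom_pos hd.nonneg p q
  have hnum : 0 < |p.1 - q.1| ^ 2 + d p.2 q.2 := by
    rcases eq_or_ne p.1 q.1 with h1 | h1
    · have h2 : p.2 ≠ q.2 := fun h2 => hpq (Prod.ext h1 h2)
      have : d p.2 q.2 ≠ 0 := fun h => h2 ((hd.eq_zero_iff _ _).mp h)
      have := hd.nonneg p.2 q.2
      have : 0 < d p.2 q.2 := lt_of_le_of_ne ‹0 ≤ d p.2 q.2› (Ne.symm ‹_›)
      positivity
    · have : 0 < |p.1 - q.1| := abs_pos.mpr (sub_ne_zero.mpr h1)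
      have := hd.nonneg p.2 q.2
      positivity
  exact mul_pos (by norm_num) (div_pos hnum hden)

lemma gfun_le_half (hd : IsWeakMetric d) {p q : ℝ × Y} (h : p.2 = q.2) :
    gfun d p q ≤ |p.1 - q.1| / 2 := by
  have hd0 : d p.2 q.2 = 0 := (hd.eq_zero_iff _ _).mpr h
  unfold gfun
  rw [hd0]
  have ha : (0:ℝ) ≤ |p.1 - q.1| := abs_nonneg _
  have hden : (0:ℝ) < |p.1 - q.1| + 0 + 1 := by linarith
  have key : (|p.1 - q.1| ^ 2 + 0) / (|p.1 - q.1| + 0 + 1) ≤ |p.1 - q.1| := by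
    rw [div_le_iff₀ hden]; nlinarith
  linarith

lemma pair_nonempty (hj : 2 ≤ j) : Nonempty {p : Fin j × Fin j // p.1 ≠ p.2} :=
  ⟨⟨(⟨0, by omega⟩, ⟨1, by omega⟩), by simp [Prod.ext_iff, Fin.ext_iff]⟩⟩

lemma vfun_bddBelow (κ : Fin j → ℝ × Y) :
    BddBelow (Set.range fun p : {p : Fin j × Fin j // p.1 ≠ p.2} =>
      gfun d (κ p.1.1) (κ p.1.2)) :=
  (Set.finite_range _).bddBelow

lemma vfun_le {κ : Fin j → ℝ × Y} {k l : Fin j} (h : k ≠ l) :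
    vfun d κ ≤ gfun d (κ k) (κ l) :=
  ciInf_le (vfun_bddBelow κ) ⟨(k, l), h⟩

lemma two_vfun_le (hd : IsWeakMetric d) {κ : Fin j → ℝ × Y} {k l : Fin j} (hkl : k ≠ l)
    (hy : (κ k).2 = (κ l).2) : 2 * vfun d κ ≤ |(κ k).1 - (κ l).1| := by
  have h1 := vfun_le (d := d) (κ := κ) hkl
  have h2 := gfun_le_half hd (p := κ k) (q := κ l) hy
  linarith

lemma continuous_gfun (hd : IsWeakMetric d) :
    Continuous fun pq : (ℝ × Y) × (ℝ × Y) => gfun d pq.1 pq.2 := by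
  have habs : Continuous fun pq : (ℝ × Y) × (ℝ × Y) => |pq.1.1 - pq.2.1| :=
    (continuous_fst.fst.sub continuous_snd.fst).abs
  have hdd : Continuous fun pq : (ℝ × Y) × (ℝ × Y) => d pq.1.2 pq.2.2 :=
    hd.continuous.comp (continuous_fst.snd.prodMk continuous_snd.snd)
  have hnum : Continuous fun pq : (ℝ × Y) × (ℝ × Y) => |pq.1.1 - pq.2.1| ^ 2 + d pq.1.2 pq.2.2 :=
    (habs.pow 2).add hdd
  have hden : Continuous fun pq : (ℝ × Y) × (ℝ × Y) => |pq.1.1 - pq.2.1| + d pq.1.2 pq.2.2 + 1 :=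
    (habs.add hdd).add continuous_const
  exact continuous_const.mul (hnum.div hden fun pq => (gfun_denom_pos hd.nonneg _ _).ne')

attribute [irreducible] gfun vfun

lemma continuous_finset_inf'_real {X : Type*} [TopologicalSpace X] {ι : Type*}
    (s : Finset ι) (hs : s.Nonempty) (f : ι → X → ℝ) (hf : ∀ i, Continuous (f i)) :
    Continuous fun x => s.inf' hs fun i => f i x := by
  induction hs using Finset.Nonempty.cons_induction with
  | singleton a => exact (hf a).congr fun x => (Finset.inf'_singleton _).symm
  | cons a s ha hne ih =>
    simp only [Finset.inf'_cons, hne]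
    exact (hf a).min ih

lemma pairFinset_nonempty (hj : 2 ≤ j) :
    (Finset.univ.filter fun p : Fin j × Fin j => p.1 ≠ p.2).Nonempty := by
  refine ⟨(⟨0, by omega⟩, ⟨1, by omega⟩), ?_⟩
  simp [Finset.mem_filter, Fin.ext_iff]

lemma vfun_eq_inf' (hj : 2 ≤ j) (κ : Fin j → ℝ × Y) :
    vfun d κ = (Finset.univ.filter fun p : Fin j × Fin j => p.1 ≠ p.2).inf'
      (pairFinset_nonempty hj) (fun p => gfun d (κ p.1) (κ p.2)) := by
  rw [vfun]
  refine le_antisymm ?_ ?_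
  · refine Finset.le_inf' _ _ fun p hp => ?_
    exact ciInf_le (vfun_bddBelow κ) ⟨p, (Finset.mem_filter.mp hp).2⟩
  · haveI := pair_nonempty (j := j) hj
    exact le_ciInf fun p => Finset.inf'_le _ (by simp [p.2])

lemma vfun_pos (hd : IsWeakMetric d) (hj : 2 ≤ j) {κ : Fin j → ℝ × Y}
    (hκ : Function.Injective κ) : 0 < vfun d κ := by
  rw [vfun_eq_inf' hj κ, Finset.lt_inf'_iff]
  intro p hp
  exact gfun_pos hd fun h => (Finset.mem_filter.mp hp).2 (hκ h)

lemma continuous_vfun (hd : IsWeakMetric d) (hj : 2 ≤ j) :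
    Continuous fun κ : Fin j → ℝ × Y => vfun d κ := by
  have h2 : Continuous fun κ : Fin j → ℝ × Y =>
      (Finset.univ.filter fun p : Fin j × Fin j => p.1 ≠ p.2).inf'
      (pairFinset_nonempty hj) (fun p => gfun d (κ p.1) (κ p.2)) := by
    have hg : ∀ p : Fin j × Fin j,
        Continuous fun κ : Fin j → ℝ × Y => gfun d (κ p.1) (κ p.2) := by
      intro p
      have h1 : Continuous fun κ : Fin j → ℝ × Y => κ p.1 := continuous_apply p.1
      have hb : Continuous fun κ : Fin j → ℝ × Y => κ p.2 := continuous_apply p.2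
      have h3 : Continuous fun κ : Fin j → ℝ × Y => (κ p.1, κ p.2) := h1.prodMk hb
      exact (continuous_gfun hd).comp' h3
    exact continuous_finset_inf'_real _ (pairFinset_nonempty hj) _ hg
  exact h2.congr fun κ => (vfun_eq_inf' hj κ).symm

lemma continuous_centers :
    Continuous fun κ : Fin j → ℝ × ℝ × Y => centersFun κ := by
  apply continuous_pi
  intro i
  exact ((((continuous_apply i).fst).add ((continuous_apply i).snd.fst)).div_const 2).prodMk
    (continuous_apply i).snd.snd

lemma centers_injective {κ : Fin j → ℝ × ℝ × Y} (hκ : κ ∈ ConeSet Y j) :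
    Function.Injective (centersFun κ) := by
  intro k l h
  by_contra hkl
  have hy : (κ k).2.2 = (κ l).2.2 := by simpa [centersFun] using congrArg Prod.snd h
  have hc : ((κ k).1 + (κ k).2.1) / 2 = ((κ l).1 + (κ l).2.1) / 2 := by
    simpa [centersFun] using congrArg Prod.fst h
  have hak := hκ.1 k
  have hal := hκ.1 l
  rcases hκ.2 k l hkl hy with h' | h' <;> linarith

lemma mem_coneSet_step (hd : IsWeakMetric d) (hj : 2 ≤ j) {κ : Fin j → ℝ × ℝ × Y}
    (hκ : κ ∈ ConeSet Y j) {s : ℝ} (hs : s ∈ Set.Icc (0:ℝ) 1) :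
    coneHomotopyFun d s κ ∈ ConeSet Y j := by
  obtain ⟨hs0, hs1⟩ := hs
  have hv : 0 < vfun d (centersFun κ) := vfun_pos hd hj (centers_injective hκ)
  set v := vfun d (centersFun κ) with hvdef
  constructor
  · intro i
    have hab := hκ.1 i
    simp only [coneHomotopyFun]
    rcases eq_or_lt_of_le hs0 with h | h
    · rw [← h]; simpa using hab
    · nlinarith
  · intro k l hkl hy
    simp only [coneHomotopyFun] at hy ⊢
    have hy' : (κ k).2.2 = (κ l).2.2 := hy
    have hgap : ∀ k l : Fin j, k ≠ l → (κ k).2.2 = (κ l).2.2 → (κ k).2.1 ≤ (κ l).1 →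
        (1 - s) * (κ k).2.1 + s * ((((κ k).1 + (κ k).2.1) / 2) + v) ≤
        (1 - s) * (κ l).1 + s * ((((κ l).1 + (κ l).2.1) / 2) - v) := by
      intro k l hkl hy hba
      have hak := hκ.1 k
      have hal := hκ.1 l
      have hyc : (centersFun κ k).2 = (centersFun κ l).2 := hy
      have h2v := two_vfun_le hd hkl hyc
      have hck : (centersFun κ k).1 = ((κ k).1 + (κ k).2.1) / 2 := rfl
      have hcl : (centersFun κ l).1 = ((κ l).1 + (κ l).2.1) / 2 := rfl
      have hlt : (centersFun κ k).1 < (centersFun κ l).1 := by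
        rw [hck, hcl]; linarith
      rw [abs_of_neg (by linarith : (centersFun κ k).1 - (centersFun κ l).1 < 0)] at h2v
      rw [hck, hcl] at h2v
      nlinarith
    rcases hκ.2 k l hkl hy' with h' | h'
    · exact Or.inl (hgap k l hkl hy' h')
    · exact Or.inr (hgap l k (Ne.symm hkl) hy'.symm h')

lemma phibar_mem_coneSet (hd : IsWeakMetric d) (hj : 2 ≤ j) {κ : Fin j → ℝ × Y}
    (hκ : Function.Injective κ) : phibarFun d κ ∈ ConeSet Y j := by
  have hv : 0 < vfun d κ := vfun_pos hd hj hκ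
  constructor
  · intro i; simp only [phibarFun]; linarith
  · intro k l hkl hy
    simp only [phibarFun] at hy ⊢
    have h2v := two_vfun_le hd hkl hy
    have hne : (κ k).1 ≠ (κ l).1 := by
      intro h; exact hkl (hκ (Prod.ext h hy))
    rcases lt_or_gt_of_ne hne with h | h
    · left; rw [abs_of_neg (by linarith)] at h2v; linarith
    · right; rw [abs_of_pos (by linarith)] at h2v; linarith

lemma centers_phibar (κ : Fin j → ℝ × Y) :
    centersFun (phibarFun d κ) = κ := by
  funext i
  simp only [centersFun, phibarFun]
  exact Prod.ext (by ring) rfl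

lemma continuous_coneHomotopy (hd : IsWeakMetric d) (hj : 2 ≤ j) :
    Continuous fun q : ℝ × (Fin j → ℝ × ℝ × Y) => coneHomotopyFun d q.1 q.2 := by
  apply continuous_pi
  intro i
  have hs : Continuous fun q : ℝ × (Fin j → ℝ × ℝ × Y) => q.1 := continuous_fst
  have hκi : Continuous fun q : ℝ × (Fin j → ℝ × ℝ × Y) => q.2 i :=
    (continuous_apply i).comp continuous_snd
  have hvc : Continuous fun q : ℝ × (Fin j → ℝ × ℝ × Y) => vfun d (centersFun q.2) :=
    ((continuous_vfun hd hj).comp continuous_centers).comp continuous_snd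
  have hc : Continuous fun q : ℝ × (Fin j → ℝ × ℝ × Y) => ((q.2 i).1 + (q.2 i).2.1) / 2 :=
    (hκi.fst.add hκi.snd.fst).div_const 2
  refine Continuous.prodMk ?_ (Continuous.prodMk ?_ ?_)
  · exact ((continuous_const.sub hs).mul hκi.fst).add (hs.mul (hc.sub hvc))
  · exact ((continuous_const.sub hs).mul hκi.snd.fst).add (hs.mul (hc.add hvc))
  · exact hκi.snd.snd

end Aux

theorem statement6 (d : Y → Y → ℝ) (hd : IsWeakMetric d) (j : ℕ) (hj : 2 ≤ j) :
    (∀ s ∈ Set.Icc (0 : ℝ) 1, ∀ κ ∈ ConeSet Y j, coneHomotopyFun d s κ ∈ ConeSet Y j) ∧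
    (∀ κ ∈ ConeSet Y j, coneHomotopyFun d 0 κ = κ) ∧
    (∀ κ ∈ ConeSet Y j, coneHomotopyFun d 1 κ = phibarFun d (centersFun κ)) ∧
    Continuous (fun p : I × ↥(ConeSet Y j) => coneHomotopyFun d (p.1 : ℝ) p.2.1) ∧
    ∃ he : ContinuousMap.HomotopyEquiv ↥(ConeSet Y j) ↥(ConfigSet (ℝ × Y) j),
      (∀ κ : ↥(ConeSet Y j), (he.toFun κ : Fin j → ℝ × Y) = centersFun κ.1) ∧
      (∀ κ' : ↥(ConfigSet (ℝ × Y) j), (he.invFun κ' : Fin j → ℝ × ℝ × Y) = phibarFun d κ'.1) := by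
  have hzero : ∀ κ ∈ ConeSet Y j, coneHomotopyFun d 0 κ = κ := by
    intro κ _
    funext i
    simp only [coneHomotopyFun]
    exact Prod.ext (by ring) (Prod.ext (by ring) rfl)
  have hone : ∀ κ ∈ ConeSet Y j, coneHomotopyFun d 1 κ = phibarFun d (centersFun κ) := by
    intro κ _
    funext i
    simp only [coneHomotopyFun, phibarFun, centersFun]
    exact Prod.ext (by ring) (Prod.ext (by ring) rfl)
  have hcont : Continuous (fun p : I × ↥(ConeSet Y j) => coneHomotopyFun d (p.1 : ℝ) p.2.1) :=
    (continuous_coneHomotopy hd hj).comp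
      ((continuous_subtype_val.comp continuous_fst).prodMk
        (continuous_subtype_val.comp continuous_snd))
  refine ⟨fun s hs κ hκ => mem_coneSet_step hd hj hκ hs, hzero, hone, hcont, ?_⟩
  -- the homotopy equivalence
  let toC : C(↥(ConeSet Y j), ↥(ConfigSet (ℝ × Y) j)) :=
    ⟨fun κ => ⟨centersFun κ.1, centers_injective κ.2⟩,
      (continuous_centers.comp continuous_subtype_val).subtype_mk _⟩
  let invC : C(↥(ConfigSet (ℝ × Y) j), ↥(ConeSet Y j)) :=
    ⟨fun κ' => ⟨phibarFun d κ'.1, phibar_mem_coneSet hd hj κ'.2⟩, by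
      have : Continuous fun κ' : Fin j → ℝ × Y => phibarFun d κ' := by
        apply continuous_pi
        intro i
        have hκi : Continuous fun κ' : Fin j → ℝ × Y => κ' i := continuous_apply i
        have hvc : Continuous fun κ' : Fin j → ℝ × Y => vfun d κ' := continuous_vfun hd hj
        exact (hκi.fst.sub hvc).prodMk ((hκi.fst.add hvc).prodMk hκi.snd)
      exact ((this.comp continuous_subtype_val).subtype_mk _)⟩
  have hright : toC.comp invC = ContinuousMap.id _ := by
    ext κ' : 1
    apply Subtype.ext
    exact centers_phibar κ'.1
  have H : ContinuousMap.Homotopy (ContinuousMap.id ↥(ConeSet Y j)) (invC.comp toC) :=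
    { toContinuousMap := ⟨fun p => ⟨coneHomotopyFun d (p.1 : ℝ) p.2.1,
        mem_coneSet_step hd hj p.2.2 ⟨p.1.2.1, p.1.2.2⟩⟩, hcont.subtype_mk _⟩
      map_zero_left := fun κ => Subtype.ext (by simpa using hzero κ.1 κ.2)
      map_one_left := fun κ => Subtype.ext (hone κ.1 κ.2) }
  refine ⟨⟨toC, invC, (ContinuousMap.Homotopic.symm ⟨H⟩), by
    rw [hright]⟩, fun κ => rfl, fun κ' => rfl⟩

end
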